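/- Let λ_1, …, λ_n and ε_1, …, ε_n be complex numbers, each family pairwise distinct, with λ_j ≠ ε_k for all j, k. Let B be the n×n Cauchy matrix with entries B_{jk} = 1/(λ_j − ε_k), and set z_i = ∏_{j=1}^n (ε_i − λ_j) / ∏_{k≠i} (ε_i − ε_k). Then B is invertible and for all i ≠ k: Σ_{j=1}^n (B⁻¹)_{ij} (B_{jk})² = −(1/(ε_i − ε_k))·(z_i/z_k), while on the diagonal Σ_{j=1}^n (B⁻¹)_{ij} (B_{ji})² = −1/z_i − Σ_{k≠i} (1/(ε_i − ε_k))·(z_k/z_i). -/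

import Mathlib

open BigOperators Finset

open Polynomial Topology Filter


lemma key_pf {n : ℕ} (x : Fin n → ℂ) (hx : Function.Injective x)
    (P : Polynomial ℂ) (hP : P.degree < n) (s : ℂ) (hs : ∀ j, s ≠ x j) :
    ∑ j, P.eval (x j) / ((∏ m ∈ Finset.univ.erase j, (x j - x m)) * (s - x j))
      = P.eval s / ∏ m, (s - x m) := by
  have hinj : Set.InjOn x (Finset.univ : Finset (Fin n)) := hx.injOn
  have hcard : P.degree < (Finset.univ : Finset (Fin n)).card := by
    simpa using hP
  have hrepr := Lagrange.eq_interpolate (f := P) hinj hcard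
  have heval : P.eval s = ∑ j, P.eval (x j) * ∏ m ∈ Finset.univ.erase j,
      ((x j - x m)⁻¹ * (s - x m)) := by
    conv_lhs => rw [hrepr]
    rw [Lagrange.interpolate_apply, eval_finset_sum]
    refine Finset.sum_congr rfl fun j _ => ?_
    rw [eval_mul, eval_C, Lagrange.basis, eval_prod]
    congr 1
    refine Finset.prod_congr rfl fun m _ => ?_
    simp [Lagrange.basisDivisor]
  have hsx : ∀ m, s - x m ≠ 0 := fun m => sub_ne_zero.mpr (hs m)
  have hd : ∀ j, (∏ m ∈ Finset.univ.erase j, (x j - x m)) ≠ 0 := by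
    intro j
    refine Finset.prod_ne_zero_iff.mpr fun m hm => sub_ne_zero.mpr ?_
    exact fun h => (Finset.mem_erase.mp hm).1 (hx h.symm)
  rw [heval, Finset.sum_div]
  refine Finset.sum_congr rfl fun j _ => ?_
  have hsplit : (∏ m, (s - x m)) = (s - x j) * ∏ m ∈ Finset.univ.erase j, (s - x m) :=
    (Finset.mul_prod_erase _ _ (Finset.mem_univ j)).symm
  rw [Finset.prod_mul_distrib, Finset.prod_inv_distrib, hsplit]
  have h1 := hd j
  have h2 := hsx j
  have h3 : (∏ m ∈ Finset.univ.erase j, (s - x m)) ≠ 0 :=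
    Finset.prod_ne_zero_iff.mpr fun m _ => hsx m
  field_simp


lemma poly_id {n : ℕ} (lam ε : Fin n → ℂ) (hε : Function.Injective ε)
    (z : Fin n → ℂ)
    (hz : ∀ i, z i = (∏ j, (ε i - lam j)) / ∏ k ∈ Finset.univ.erase i, (ε i - ε k)) :
    (∏ m, (X - C (lam m))) = (∏ m, (X - C (ε m)))
      + ∑ k, C (z k) * ∏ m ∈ Finset.univ.erase k, (X - C (ε m)) := by
  set Λ : Polynomial ℂ := ∏ m, (X - C (lam m)) with hΛ
  set E : Polynomial ℂ := ∏ m, (X - C (ε m)) with hE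
  have hmonΛ : Λ.Monic := monic_prod_of_monic _ _ fun m _ => monic_X_sub_C _
  have hmonE : E.Monic := monic_prod_of_monic _ _ fun m _ => monic_X_sub_C _
  have hdegΛ : Λ.degree = n := by
    rw [hΛ, degree_prod]
    simp [degree_X_sub_C]
  have hdegE : E.degree = n := by
    rw [hE, degree_prod]
    simp [degree_X_sub_C]
  have hΛ0 : Λ ≠ 0 := hmonΛ.ne_zero
  have hd : (Λ - E).degree < n := by
    rcases eq_or_ne Λ E with h | h
    · rw [h, sub_self, degree_zero]
      exact_mod_cast WithBot.bot_lt_coe n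
    · have := Polynomial.degree_sub_lt (hdegΛ.trans hdegE.symm) hΛ0
        (by rw [hmonΛ.leadingCoeff, hmonE.leadingCoeff])
      rwa [hdegΛ] at this
  have hinj : Set.InjOn ε (Finset.univ : Finset (Fin n)) := hε.injOn
  have hcard : (Λ - E).degree < (Finset.univ : Finset (Fin n)).card := by simpa using hd
  have hrepr := Lagrange.eq_interpolate (f := Λ - E) hinj hcard
  have hEk : ∀ k, E.eval (ε k) = 0 := by
    intro k
    rw [hE, eval_prod]
    exact Finset.prod_eq_zero (Finset.mem_univ k) (by simp)
  have hne : ∀ k, (∏ m ∈ Finset.univ.erase k, (ε k - ε m)) ≠ 0 := by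
    intro k
    refine Finset.prod_ne_zero_iff.mpr fun m hm => sub_ne_zero.mpr ?_
    exact fun h => (Finset.mem_erase.mp hm).1 (hε h.symm)
  have : Λ - E = ∑ k, C (z k) * ∏ m ∈ Finset.univ.erase k, (X - C (ε m)) := by
    rw [hrepr, Lagrange.interpolate_apply]
    refine Finset.sum_congr rfl fun k _ => ?_
    rw [Lagrange.basis]
    have hbasis : (∏ m ∈ Finset.univ.erase k, Lagrange.basisDivisor (ε k) (ε m))
        = C ((∏ m ∈ Finset.univ.erase k, (ε k - ε m))⁻¹)
          * ∏ m ∈ Finset.univ.erase k, (X - C (ε m)) := by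
      unfold Lagrange.basisDivisor
      rw [Finset.prod_mul_distrib, ← map_prod, Finset.prod_inv_distrib]
    rw [hbasis, ← mul_assoc, ← C_mul]
    congr 2
    rw [eval_sub, hEk k, sub_zero, hz k, hΛ, eval_prod]
    simp only [eval_sub, eval_X, eval_C]
    rw [div_eq_mul_inv]
  linear_combination this

lemma deg_prod_lin {n : ℕ} (v : Fin n → ℂ) (s : Finset (Fin n)) :
    (∏ m ∈ s, (X - C (v m))).degree = (s.card : WithBot ℕ) := by
  rw [degree_prod]
  simp only [degree_X_sub_C]
  rw [Finset.sum_const, nsmul_eq_mul, mul_one]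

theorem cauchy_main
    (n : ℕ) (lam ε : Fin n → ℂ)
    (hlam : Function.Injective lam) (hε : Function.Injective ε)
    (hlamε : ∀ j k, lam j ≠ ε k)
    (B : Matrix (Fin n) (Fin n) ℂ)
    (hB : ∀ j k, B j k = 1 / (lam j - ε k))
    (z : Fin n → ℂ)
    (hz : ∀ i, z i = (∏ j, (ε i - lam j)) / ∏ k ∈ Finset.univ.erase i, (ε i - ε k)) :
    IsUnit B
    ∧ (∀ i k, i ≠ k →
        ∑ j, B⁻¹ i j * (B j k) ^ 2 = -(1 / (ε i - ε k)) * (z i / z k))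
    ∧ (∀ i, ∑ j, B⁻¹ i j * (B j i) ^ 2
        = -1 / z i - ∑ k ∈ Finset.univ.erase i, (1 / (ε i - ε k)) * (z k / z i)) := by
  -- basic nonvanishing facts
  have hld : ∀ j, (∏ m ∈ Finset.univ.erase j, (lam j - lam m)) ≠ 0 := by
    intro j
    refine Finset.prod_ne_zero_iff.mpr fun m hm => sub_ne_zero.mpr ?_
    exact fun h => (Finset.mem_erase.mp hm).1 (hlam h.symm)
  have hεl : ∀ k, (∏ m, (ε k - lam m)) ≠ 0 := fun k =>
    Finset.prod_ne_zero_iff.mpr fun m _ => sub_ne_zero.mpr fun h => hlamε m k h.symm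
  have hεε : ∀ i, (∏ m ∈ Finset.univ.erase i, (ε i - ε m)) ≠ 0 := by
    intro i
    refine Finset.prod_ne_zero_iff.mpr fun m hm => sub_ne_zero.mpr ?_
    exact fun h => (Finset.mem_erase.mp hm).1 (hε h.symm)
  have hzne : ∀ i, z i ≠ 0 := fun i => by
    rw [hz i]; exact div_ne_zero (hεl i) (hεε i)
  -- the polynomials
  set Pp : Fin n → Polynomial ℂ := fun i => ∏ m ∈ Finset.univ.erase i, (X - C (ε m)) with hPp
  have hPpev : ∀ i t, (Pp i).eval t = ∏ m ∈ Finset.univ.erase i, (t - ε m) := by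
    intro i t; rw [hPp]; simp [eval_prod]
  have hPpdeg : ∀ i : Fin n, (Pp i).degree < n := by
    intro i
    show (∏ m ∈ Finset.univ.erase i, (X - C (ε m))).degree < (n : WithBot ℕ)
    rw [deg_prod_lin, Finset.card_erase_of_mem (Finset.mem_univ i), Finset.card_univ,
      Fintype.card_fin]
    exact_mod_cast Nat.sub_lt (Fin.pos i) one_pos
  -- the candidate inverse
  set A : Matrix (Fin n) (Fin n) ℂ := fun i j =>
    -(z i) * (Pp i).eval (lam j) / ∏ m ∈ Finset.univ.erase j, (lam j - lam m) with hA
  -- resolvent computation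
  have hres : ∀ (i : Fin n) (s : ℂ), (∀ j, s ≠ lam j) →
      ∑ j, A i j * (1 / (lam j - s)) = z i * ((Pp i).eval s / ∏ m, (s - lam m)) := by
    intro i s hs
    have := key_pf lam hlam (Pp i) (hPpdeg i) s hs
    rw [← this, Finset.mul_sum]
    refine Finset.sum_congr rfl fun j _ => ?_
    rw [hA]
    have h1 := hld j
    have h2 : lam j - s ≠ 0 := sub_ne_zero.mpr fun h => hs j h.symm
    have h3 : s - lam j ≠ 0 := sub_ne_zero.mpr (hs j)
    field_simp
    ring
  -- A * B = 1
  have hAB : ∀ i k, ∑ j, A i j * B j k = if i = k then 1 else 0 := by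
    intro i k
    have hcol : ∀ j, B j k = 1 / (lam j - ε k) := fun j => hB j k
    have := hres i (ε k) (fun j => fun h => hlamε j k h.symm)
    rw [show (∑ j, A i j * B j k) = ∑ j, A i j * (1 / (lam j - ε k)) from
      Finset.sum_congr rfl fun j _ => by rw [hcol j], this]
    rcases eq_or_ne i k with h | h
    · subst h
      rw [if_pos rfl, hPpev, hz i]
      field_simp
      exact div_self (mul_ne_zero (hεl i) (hεε i))
    · rw [if_neg h, hPpev]
      have : (∏ m ∈ Finset.univ.erase i, (ε k - ε m)) = 0 :=
        Finset.prod_eq_zero (Finset.mem_erase.mpr ⟨Ne.symm h, Finset.mem_univ k⟩) (by simp)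
      rw [this]
      simp
  have hABone : A * B = 1 := by
    ext i k
    rw [Matrix.mul_apply, hAB, Matrix.one_apply]
  have hUnit : IsUnit B := (Matrix.isUnit_iff_isUnit_det B).mpr (Matrix.isUnit_det_of_left_inverse hABone)
  have hBinv : B⁻¹ = A := Matrix.inv_eq_left_inv hABone
  refine ⟨hUnit, ?_, ?_⟩
  · -- off-diagonal
    intro i k hik
    rw [hBinv]
    have hki : k ∈ Finset.univ.erase i := Finset.mem_erase.mpr ⟨Ne.symm hik, Finset.mem_univ k⟩
    set Q : Polynomial ℂ := ∏ m ∈ (Finset.univ.erase i).erase k, (X - C (ε m)) with hQ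
    have hQsplit : Pp i = (X - C (ε k)) * Q := by
      rw [hPp, hQ]
      exact (Finset.mul_prod_erase _ _ hki).symm
    have hQdeg : Q.degree < n := by
      rw [hQ, deg_prod_lin]
      have h1 : ((Finset.univ.erase i).erase k).card ≤ (Finset.univ.erase i).card :=
        Finset.card_le_card (Finset.erase_subset _ _)
      have h2 : (Finset.univ.erase i).card < n := by
        rw [Finset.card_erase_of_mem (Finset.mem_univ i), Finset.card_univ, Fintype.card_fin]
        exact Nat.sub_lt (Fin.pos i) one_pos
      exact_mod_cast lt_of_le_of_lt h1 h2
    have hterm : ∀ j, A i j * (B j k) ^ 2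
        = z i * (Q.eval (lam j) / ((∏ m ∈ Finset.univ.erase j, (lam j - lam m)) * (ε k - lam j))) := by
      intro j
      have hev : (Pp i).eval (lam j) = (lam j - ε k) * Q.eval (lam j) := by
        rw [hQsplit]; simp [eval_mul]
      have h1 := hld j
      have h2 : lam j - ε k ≠ 0 := sub_ne_zero.mpr (hlamε j k)
      have h3 : ε k - lam j ≠ 0 := fun h => h2 (by linear_combination -h)
      rw [hB j k]
      show -(z i) * (Pp i).eval (lam j) / (∏ m ∈ Finset.univ.erase j, (lam j - lam m))
        * (1 / (lam j - ε k)) ^ 2 = _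
      rw [hev]
      field_simp
      ring
    rw [Finset.sum_congr rfl fun j _ => hterm j, ← Finset.mul_sum,
      key_pf lam hlam Q hQdeg (ε k) (fun j h => hlamε j k h.symm)]
    have hQev : Q.eval (ε k) = ∏ m ∈ (Finset.univ.erase i).erase k, (ε k - ε m) := by
      rw [hQ]; simp [eval_prod]
    rw [hQev, hz k, hz i]
    have hsplitk : (∏ m ∈ Finset.univ.erase k, (ε k - ε m))
        = (ε k - ε i) * ∏ m ∈ (Finset.univ.erase i).erase k, (ε k - ε m) := by
      rw [Finset.erase_right_comm]
      exact (Finset.mul_prod_erase _ _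
        (Finset.mem_erase.mpr ⟨hik, Finset.mem_univ i⟩)).symm
    rw [hsplitk]
    have hD : (∏ m ∈ (Finset.univ.erase i).erase k, (ε k - ε m)) ≠ 0 := by
      refine Finset.prod_ne_zero_iff.mpr fun m hm => sub_ne_zero.mpr fun h => ?_
      exact (Finset.mem_erase.mp hm).1 (hε h.symm)
    have hki' : ε k - ε i ≠ 0 := sub_ne_zero.mpr fun h => hik (hε h.symm)
    have hik' : ε i - ε k ≠ 0 := sub_ne_zero.mpr fun h => hik (hε h)
    have hL := hεl k
    have hLi := hεl i
    have hEi := hεε i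
    field_simp
    ring
  · -- diagonal
    intro i
    rw [hBinv]
    have hεlam : ∀ j, (ε i : ℂ) ≠ lam j := fun j h => hlamε j i h.symm
    set H : Polynomial ℂ := Pp i + ∑ k ∈ Finset.univ.erase i,
      C (z k) * ∏ m ∈ (Finset.univ.erase i).erase k, (X - C (ε m)) with hH
    have hHev : ∀ t : ℂ, H.eval t = (∏ m ∈ Finset.univ.erase i, (t - ε m))
        + ∑ k ∈ Finset.univ.erase i, z k * ∏ m ∈ (Finset.univ.erase i).erase k, (t - ε m) := by
      intro t
      rw [hH]
      simp [hPpev, eval_prod, eval_finset_sum]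
    set F : ℂ → ℂ := fun t => ∑ j, A i j * (1 / ((lam j - ε i) * (lam j - t))) with hFdef
    set G : ℂ → ℂ := fun t => -(H.eval t) / ∏ m, (t - lam m) with hGdef
    -- the sum we need equals F (ε i)
    have hstep : ∑ j, A i j * (B j i) ^ 2 = F (ε i) := by
      refine Finset.sum_congr rfl fun j _ => ?_
      show A i j * (B j i) ^ 2 = A i j * (1 / ((lam j - ε i) * (lam j - ε i)))
      rw [hB j i, div_pow, one_pow, sq]
    -- F = G away from the bad points
    have hFG : ∀ t : ℂ, t ≠ ε i → (∀ j, t ≠ lam j) → F t = G t := by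
      intro t ht htl
      have hΛt : (∏ m, (t - lam m)) ≠ 0 :=
        Finset.prod_ne_zero_iff.mpr fun m _ => sub_ne_zero.mpr (htl m)
      have hone : ∑ j, A i j * (1 / (lam j - ε i)) = 1 := by
        have h := hAB i i
        rw [if_pos rfl] at h
        calc ∑ j, A i j * (1 / (lam j - ε i)) = ∑ j, A i j * B j i :=
              Finset.sum_congr rfl fun j _ => by rw [hB j i]
          _ = 1 := h
      have hsplit : F t = (1 / (ε i - t)) *
          ((∑ j, A i j * (1 / (lam j - ε i))) - ∑ j, A i j * (1 / (lam j - t))) := by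
        show (∑ j, A i j * (1 / ((lam j - ε i) * (lam j - t)))) = _
        rw [← Finset.sum_sub_distrib, Finset.mul_sum]
        refine Finset.sum_congr rfl fun j _ => ?_
        have h1 : lam j - ε i ≠ 0 := sub_ne_zero.mpr fun h => hεlam j h.symm
        have h2 : lam j - t ≠ 0 := sub_ne_zero.mpr fun h => htl j h.symm
        have h3 : ε i - t ≠ 0 := sub_ne_zero.mpr (Ne.symm ht)
        field_simp
        ring
      rw [hsplit, hone, hres i t htl]
      -- the polynomial identity evaluated at t
      have hpid := congrArg (eval t) (poly_id lam ε hε z hz)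
      rw [eval_add, eval_prod, eval_prod, eval_finset_sum] at hpid
      simp only [eval_mul, eval_sub, eval_X, eval_C, eval_prod] at hpid
      rw [← Finset.add_sum_erase _ _ (Finset.mem_univ i)] at hpid
      -- hpid : ∏ (t - lam m) = ∏ (t - ε m) + (z i * ∏_{m≠i}(t-ε m) + ∑_{k≠i} ...)
      have hEsplit : (∏ m, (t - ε m)) = (t - ε i) * ∏ m ∈ Finset.univ.erase i, (t - ε m) :=
        (Finset.mul_prod_erase _ _ (Finset.mem_univ i)).symm
      have hksplit : ∀ k ∈ Finset.univ.erase i,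
          (∏ m ∈ Finset.univ.erase k, (t - ε m))
            = (t - ε i) * ∏ m ∈ (Finset.univ.erase i).erase k, (t - ε m) := by
        intro k hk
        rw [Finset.erase_right_comm]
        exact (Finset.mul_prod_erase _ _ (Finset.mem_erase.mpr
          ⟨fun h => (Finset.mem_erase.mp hk).1 h.symm, Finset.mem_univ i⟩)).symm
      have hsum2 : ∑ k ∈ Finset.univ.erase i, z k * ∏ m ∈ Finset.univ.erase k, (t - ε m)
          = (t - ε i) * ∑ k ∈ Finset.univ.erase i,
              z k * ∏ m ∈ (Finset.univ.erase i).erase k, (t - ε m) := by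
        rw [Finset.mul_sum]
        refine Finset.sum_congr rfl fun k hk => ?_
        rw [hksplit k hk]
        ring
      have hfact : (∏ m, (t - lam m)) - z i * (Pp i).eval t = (t - ε i) * H.eval t := by
        rw [hHev t, hPpev i t]
        linear_combination hpid + hsum2 + hEsplit
      show _ = -(H.eval t) / ∏ m, (t - lam m)
      have h3 : ε i - t ≠ 0 := sub_ne_zero.mpr (Ne.symm ht)
      field_simp
      linear_combination hfact
    -- continuity of F and G at ε i
    have hFc : ContinuousAt F (ε i) := by
      have hterm : ∀ j : Fin n,
          ContinuousAt (fun t : ℂ => A i j * (1 / ((lam j - ε i) * (lam j - t)))) (ε i) := by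
        intro j
        have h0 : lam j - ε i ≠ 0 := sub_ne_zero.mpr (hlamε j i)
        exact continuousAt_const.mul (continuousAt_const.div
          (continuousAt_const.mul (continuousAt_const.sub continuousAt_id))
          (mul_ne_zero h0 h0))
      exact tendsto_finset_sum _ fun j _ => hterm j
    have hGc : ContinuousAt G (ε i) := by
      rw [hGdef]
      apply ContinuousAt.div
      · exact (H.continuous.neg).continuousAt
      · exact (continuous_finset_prod _ fun m _ => (continuous_id.sub continuous_const)).continuousAt
      · exact hεl i
    have hlim : F (ε i) = G (ε i) := by
      have h1 : ∀ᶠ t in 𝓝 (ε i), ∀ j, t ≠ lam j := by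
        rw [Filter.eventually_all]
        exact fun j => eventually_ne_nhds (hεlam j)
      have hev : ∀ᶠ t in 𝓝[≠] (ε i), F t = G t := by
        filter_upwards [eventually_nhdsWithin_of_eventually_nhds h1,
          self_mem_nhdsWithin] with t h1t h2t
        exact hFG t h2t h1t
      exact tendsto_nhds_unique (hFc.continuousWithinAt.tendsto)
        ((hGc.continuousWithinAt.tendsto).congr'
          (by filter_upwards [hev] with t ht; exact ht.symm))
    rw [hstep, hlim]
    show -(H.eval (ε i)) / ∏ m, (ε i - lam m) = _
    rw [hHev (ε i)]
    have hL := hεl i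
    have h1z : (-1 : ℂ) / z i
        = -((∏ m ∈ Finset.univ.erase i, (ε i - ε m)) / ∏ m, (ε i - lam m)) := by
      rw [hz i, neg_div, one_div_div]
    have hterm2 : ∀ k ∈ Finset.univ.erase i, (1 / (ε i - ε k)) * (z k / z i)
        = (z k * ∏ m ∈ (Finset.univ.erase i).erase k, (ε i - ε m)) / ∏ m, (ε i - lam m) := by
      intro k hk
      have hik : ε i - ε k ≠ 0 := sub_ne_zero.mpr fun h =>
        (Finset.mem_erase.mp hk).1 (hε h.symm)
      have hEik : (∏ m ∈ Finset.univ.erase i, (ε i - ε m))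
          = (ε i - ε k) * ∏ m ∈ (Finset.univ.erase i).erase k, (ε i - ε m) :=
        (Finset.mul_prod_erase _ _ hk).symm
      rw [hz i, hEik]
      have hDk : (∏ m ∈ (Finset.univ.erase i).erase k, (ε i - ε m)) ≠ 0 := by
        refine Finset.prod_ne_zero_iff.mpr fun m hm => sub_ne_zero.mpr fun h => ?_
        exact (Finset.mem_erase.mp (Finset.mem_of_mem_erase hm)).1 (hε h.symm)
      field_simp
    rw [h1z, Finset.sum_congr rfl hterm2, ← Finset.sum_div]
    ring

/-- the Cauchy matrix `B_{jk} = 1/(λ_j - ε_k)` is invertible, and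
`Σ_j (B⁻¹)_{ij} (B_{jk})² = -(1/(ε_i-ε_k)) z_i/z_k` for `i ≠ k`, while
`Σ_j (B⁻¹)_{ij} (B_{ji})² = -1/z_i - Σ_{k≠i} (1/(ε_i-ε_k)) z_k/z_i`. -/
theorem cauchy_inverse_square_sums
    (n : ℕ) (lam ε : Fin n → ℂ)
    (hlam : Function.Injective lam) (hε : Function.Injective ε)
    (hlamε : ∀ j k, lam j ≠ ε k)
    (B : Matrix (Fin n) (Fin n) ℂ)
    (hB : ∀ j k, B j k = 1 / (lam j - ε k))
    (z : Fin n → ℂ)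
    (hz : ∀ i, z i = (∏ j, (ε i - lam j)) / ∏ k ∈ Finset.univ.erase i, (ε i - ε k)) :
    IsUnit B
    ∧ (∀ i k, i ≠ k →
        ∑ j, B⁻¹ i j * (B j k) ^ 2 = -(1 / (ε i - ε k)) * (z i / z k))
    ∧ (∀ i, ∑ j, B⁻¹ i j * (B j i) ^ 2
        = -1 / z i - ∑ k ∈ Finset.univ.erase i, (1 / (ε i - ε k)) * (z k / z i)) :=
  cauchy_main n lam ε hlam hε hlamε B hB z hz
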